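/- Let Z > 0, a ≥ 0, Φ(π) = Z·π/(1-π) + a, Π(π) = Φ(π)/(1+Φ(π)). If g : [0,1] → ℝ is concave (not necessarily smooth), then π ↦ (1-π)(1+Φ(π)) g(Π(π)) is concave on (0,1). -/

import Mathlib

open Set

/-- with Z > 0, a ≥ 0, Φ(x) = Z·x/(1-x) + a, Π(x) = Φ(x)/(1+Φ(x)), and
g : [0,1] → ℝ concave (not necessarily smooth), the function
x ↦ (1-x)(1+Φ(x))g(Π(x)) is concave on (0,1). -/
theorem stmt13 (Z a : ℝ) (hZ : 0 < Z) (ha : 0 ≤ a)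
    (Φ Pi G g : ℝ → ℝ)
    (hg : ConcaveOn ℝ (Set.Icc (0:ℝ) 1) g)
    (hΦ : ∀ x : ℝ, Φ x = Z * x / (1 - x) + a)
    (hPi : ∀ x : ℝ, Pi x = Φ x / (1 + Φ x))
    (hG : ∀ x : ℝ, G x = (1 - x) * (1 + Φ x) * g (Pi x)) :
    ConcaveOn ℝ (Set.Ioo (0:ℝ) 1) G := by
  set L : ℝ → ℝ := fun x => (1 + a) * (1 - x) + Z * x with hLdef
  set M : ℝ → ℝ := fun x => Z * x + a * (1 - x) with hMdef
  have hLpos : ∀ x ∈ Ioo (0:ℝ) 1, 0 < L x := by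
    intro x hx
    have h1 : 0 < 1 - x := by linarith [hx.2]
    have h2 : 0 < (1 + a) * (1 - x) := by positivity
    have h3 : 0 < Z * x := mul_pos hZ hx.1
    simp only [hLdef]; linarith
  have hMnn : ∀ x ∈ Ioo (0:ℝ) 1, 0 ≤ M x := by
    intro x hx
    have h1 : (0:ℝ) ≤ 1 - x := by linarith [hx.2]
    have h2 := hx.1.le
    simp only [hMdef]; positivity
  have hML : ∀ x ∈ Ioo (0:ℝ) 1, M x ≤ L x := by
    intro x hx; simp only [hLdef, hMdef]; nlinarith [hx.2]
  have hGeq : ∀ x ∈ Ioo (0:ℝ) 1, G x = L x * g (M x / L x) := by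
    intro x hx
    have h1 : (1 : ℝ) - x ≠ 0 := by have := hx.2; intro h; nlinarith [sub_eq_zero.mp h]
    have hLne : L x ≠ 0 := ne_of_gt (hLpos x hx)
    have hΦx : 1 + Φ x = L x / (1 - x) := by
      rw [hΦ]; simp only [hLdef]; field_simp; ring
    have hΦM : Φ x = M x / (1 - x) := by
      rw [hΦ]; simp only [hMdef]; field_simp
    have hLx : (1 - x) * (1 + Φ x) = L x := by
      rw [hΦx]; field_simp
    have hPix : Pi x = M x / L x := by
      rw [hPi, hΦx, hΦM]
      rw [div_div_div_eq]
      rw [mul_comm (M x) (1 - x), mul_div_mul_left _ _ h1]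
    rw [hG, hLx, hPix]
  constructor
  · exact convex_Ioo 0 1
  intro x hx y hy p q hp hq hpq
  have hz : p • x + q • y ∈ Ioo (0:ℝ) 1 := (convex_Ioo 0 1) hx hy hp hq hpq
  have hq1 : q = 1 - p := by linarith
  subst hq1
  set z := p • x + (1 - p) • y with hzdef
  have hLz : L z = p * L x + (1 - p) * L y := by
    simp only [hLdef, hzdef, smul_eq_mul]; ring
  have hMz : M z = p * M x + (1 - p) * M y := by
    simp only [hMdef, hzdef, smul_eq_mul]; ring
  have hLzpos := hLpos z hz
  have hLzne : L z ≠ 0 := ne_of_gt hLzpos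
  have hLxne : L x ≠ 0 := ne_of_gt (hLpos x hx)
  have hLyne : L y ≠ 0 := ne_of_gt (hLpos y hy)
  have hu : M x / L x ∈ Icc (0:ℝ) 1 :=
    ⟨div_nonneg (hMnn x hx) (hLpos x hx).le, (div_le_one (hLpos x hx)).mpr (hML x hx)⟩
  have hv : M y / L y ∈ Icc (0:ℝ) 1 :=
    ⟨div_nonneg (hMnn y hy) (hLpos y hy).le, (div_le_one (hLpos y hy)).mpr (hML y hy)⟩
  have hs : 0 ≤ p * L x / L z := div_nonneg (mul_nonneg hp (hLpos x hx).le) hLzpos.le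
  have ht : 0 ≤ (1 - p) * L y / L z := div_nonneg (mul_nonneg hq (hLpos y hy).le) hLzpos.le
  have hst : p * L x / L z + (1 - p) * L y / L z = 1 := by
    rw [← add_div, ← hLz, div_self hLzne]
  have hcomb : (p * L x / L z) • (M x / L x) + ((1 - p) * L y / L z) • (M y / L y)
      = M z / L z := by
    simp only [smul_eq_mul]
    rw [hMz]
    field_simp
  have hgineq := hg.2 hu hv hs ht hst
  rw [hcomb] at hgineq
  have hmul := mul_le_mul_of_nonneg_left hgineq hLzpos.le
  rw [hGeq x hx, hGeq y hy, hGeq z hz, smul_eq_mul, smul_eq_mul]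
  calc p * (L x * g (M x / L x)) + (1 - p) * (L y * g (M y / L y))
      = L z * ((p * L x / L z) • g (M x / L x) + ((1 - p) * L y / L z) • g (M y / L y)) := by
        simp only [smul_eq_mul]
        field_simp
    _ ≤ L z * g (M z / L z) := hmul
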